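/- Let n ≥ 1 be a natural number and let a : Fin n → ℝ satisfy a_i > 0 for all i (the boundary areas). Let A ≥ 0 be a real number (the Dirichlet energy ∫|∇v|²), let J : Fin n → ℝ satisfy J_i ≥ 0 with B := Σ_i √(π / a_i)·J_i > 0, and let I : Fin n → ℝ satisfy, for every real δ > 0 and every i, I_i ≥ (1 - δ⁻¹)·a_i + (1 - δ)·J_i. Let κ ∈ (0, 1] and η ∈ ℝ and suppose (3/8)·A + (κ/2)·Σ_i √(π / a_i)·I_i ≤ η·Σ_i √(π·a_i). Then, setting σ := A / (2·κ·B), one has η ≥ κ·σ / (2·(1 + σ)). -/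

import Mathlib

theorem key_lower_bound_for_Q (n : ℕ) (hn : 1 ≤ n)
    (a : Fin n → ℝ) (ha : ∀ i, 0 < a i)
    (A : ℝ) (hA : 0 ≤ A)
    (J : Fin n → ℝ) (hJ : ∀ i, 0 ≤ J i)
    (hB : 0 < ∑ i, Real.sqrt (Real.pi / a i) * J i)
    (I : Fin n → ℝ)
    (hI : ∀ δ : ℝ, 0 < δ → ∀ i, I i ≥ (1 - δ⁻¹) * a i + (1 - δ) * J i)
    (κ : ℝ) (hκ : κ ∈ Set.Ioc (0 : ℝ) 1) (η : ℝ)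
    (hQ : (3 / 8) * A + (κ / 2) * ∑ i, Real.sqrt (Real.pi / a i) * I i ≤
      η * ∑ i, Real.sqrt (Real.pi * a i)) :
    η ≥ κ * (A / (2 * κ * ∑ i, Real.sqrt (Real.pi / a i) * J i)) /
        (2 * (1 + A / (2 * κ * ∑ i, Real.sqrt (Real.pi / a i) * J i))) := by
  obtain ⟨hκ0, hκ1⟩ := hκ
  set B := ∑ i, Real.sqrt (Real.pi / a i) * J i with hBdef
  set S := ∑ i, Real.sqrt (Real.pi * a i) with hSdef
  have hS : 0 < S := by
    apply Finset.sum_pos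
    · intro i _
      exact Real.sqrt_pos.mpr (mul_pos Real.pi_pos (ha i))
    · exact Finset.univ_nonempty_iff.mpr (Fin.pos_iff_nonempty.mp hn)
  set σ := A / (2 * κ * B) with hσdef
  have hσ0 : 0 ≤ σ := by positivity
  have hδ : (0:ℝ) < 1 + σ := by linarith
  have hAeq : A = 2 * κ * B * σ := by
    rw [hσdef]; field_simp
  have h1 : ∀ i, Real.sqrt (Real.pi / a i) * a i = Real.sqrt (Real.pi * a i) := by
    intro i
    have ha' := (ha i).le
    have hne := (ha i).ne'
    have h2 : Real.pi / a i * (a i)^2 = Real.pi * a i := by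
      field_simp
    calc Real.sqrt (Real.pi / a i) * a i
        = Real.sqrt (Real.pi / a i) * Real.sqrt ((a i)^2) := by rw [Real.sqrt_sq ha']
      _ = Real.sqrt (Real.pi / a i * (a i)^2) := (Real.sqrt_mul (by positivity) _).symm
      _ = Real.sqrt (Real.pi * a i) := by rw [h2]
  have hsum : (1 - (1+σ)⁻¹) * S + (1 - (1+σ)) * B ≤
      ∑ i, Real.sqrt (Real.pi / a i) * I i := by
    rw [hSdef, hBdef, Finset.mul_sum, Finset.mul_sum, ← Finset.sum_add_distrib]
    apply Finset.sum_le_sum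
    intro i _
    have hIi := hI (1+σ) hδ i
    have hs : 0 ≤ Real.sqrt (Real.pi / a i) := Real.sqrt_nonneg _
    have h1i := h1 i
    calc (1 - (1+σ)⁻¹) * Real.sqrt (Real.pi * a i)
          + (1 - (1+σ)) * (Real.sqrt (Real.pi / a i) * J i)
        = Real.sqrt (Real.pi / a i) * ((1 - (1+σ)⁻¹) * a i + (1 - (1+σ)) * J i) := by
          rw [← h1i]; ring
      _ ≤ Real.sqrt (Real.pi / a i) * I i := mul_le_mul_of_nonneg_left hIi hs
  have hcomb : (3 / 8) * A + (κ / 2) * ((1 - (1+σ)⁻¹) * S + (1 - (1+σ)) * B) ≤ η * S := by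
    have : (κ / 2) * ((1 - (1+σ)⁻¹) * S + (1 - (1+σ)) * B) ≤
        (κ / 2) * ∑ i, Real.sqrt (Real.pi / a i) * I i :=
      mul_le_mul_of_nonneg_left hsum (by positivity)
    linarith
  have ht : (1+σ) * (1+σ)⁻¹ = 1 := mul_inv_cancel₀ (ne_of_gt hδ)
  rw [ge_iff_le, div_le_iff₀ (by positivity)]
  have hmul := mul_le_mul_of_nonneg_right hcomb hδ.le
  have h3 : (1 - (1+σ)⁻¹) * (1+σ) = σ := by field_simp; ring
  have hmul2 : 3/8*A*(1+σ) + κ/2*(σ*S - σ*(1+σ)*B) ≤ η*S*(1+σ) := by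
    rw [show (3/8*A + κ/2*((1-(1+σ)⁻¹)*S + (1-(1+σ))*B)) * (1+σ)
        = 3/8*A*(1+σ) + κ/2*(((1-(1+σ)⁻¹)*(1+σ))*S - σ*(1+σ)*B) from by ring, h3] at hmul
    exact hmul
  nlinarith [hmul2, hAeq, hS, hσ0, hA, mul_nonneg hA hσ0]
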